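/- For every k ∈ ℕ with k ≥ 1 and every h ∈ ℂ with Re(h) > 1, the series below converge absolutely and the (h,q)-Bernoulli number satisfies β_{k,q}^h = −k · Σ_{n=0}^{∞} q^{hn}·[n]_q^{k−1} + (h−1)(1−q) · Σ_{n=0}^{∞} q^{(h−1)n}·[n]_q^{k}, where in the n = 0 term the convention [0]_q^{0} = 1 is used (i.e. 0^0 = 1). -/

import Mathlib

open Complex Finset Filter

/-- Complex power `q^z := exp(z·log q)` for a real base `q`. -/
noncomputable def qcpow (q : ℝ) (z : ℂ) : ℂ := Complex.exp (z * (Real.log q : ℂ))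

/-- The complex `q`-number `[z]_q = (1 - q^z)/(1 - q)`. -/
noncomputable def qnum (q : ℝ) (z : ℂ) : ℂ := (1 - qcpow q z) / (1 - (q : ℂ))

/-- The real `q`-number `[y]_q = (1 - q^y)/(1 - q)` for real `y`. -/
noncomputable def qnumR (q : ℝ) (y : ℝ) : ℝ := (1 - Real.exp (y * Real.log q)) / (1 - q)

/-- The `(h,q)`-Bernoulli polynomial
`β_{n,q}^h(x) = (1-q)^{-n} ∑_{l=0}^{n} C(n,l) (-1)^l q^{lx} (l+h-1)/[l+h-1]_q`. -/
noncomputable def qbeta (q : ℝ) (h : ℂ) (n : ℕ) (x : ℝ) : ℂ :=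
  (1 - (q : ℂ))⁻¹ ^ n * ∑ l ∈ Finset.range (n + 1),
    (n.choose l : ℂ) * (-1) ^ l * qcpow q ((l : ℂ) * (x : ℂ)) *
      (((l : ℂ) + h - 1) / qnum q ((l : ℂ) + h - 1))


lemma qcpow_add (q : ℝ) (z w : ℂ) : qcpow q (z + w) = qcpow q z * qcpow q w := by
  simp [qcpow, add_mul, Complex.exp_add]

lemma qcpow_nat_mul (q : ℝ) (z : ℂ) (n : ℕ) : qcpow q (z * (n : ℂ)) = qcpow q z ^ n := by
  rw [qcpow, qcpow, ← Complex.exp_nat_mul]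
  ring_nf

lemma norm_qcpow (q : ℝ) (z : ℂ) : ‖qcpow q z‖ = Real.exp (z.re * Real.log q) := by
  rw [qcpow, Complex.norm_exp]
  simp [Complex.mul_re]

lemma qcpow_natcast (q : ℝ) (n : ℕ) :
    qcpow q (n : ℂ) = ((Real.exp (n * Real.log q) : ℝ) : ℂ) := by
  rw [Complex.ofReal_exp, qcpow]
  norm_cast

lemma qnumR_cast (q : ℝ) (n : ℕ) :
    ((qnumR q (n : ℝ) : ℝ) : ℂ) = (1 - qcpow q (n : ℂ)) / (1 - (q : ℂ)) := by
  rw [qnumR, qcpow_natcast]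
  push_cast
  ring

lemma key_alg (m : ℕ) (h x : ℂ) :
    ∑ l ∈ Finset.range (m + 2), ((m+1).choose l : ℂ) * (-1) ^ l * ((l : ℂ) + h - 1) * x ^ l
      = -((m : ℂ) + 1) * x * (1 - x) ^ m + (h - 1) * (1 - x) ^ (m + 1) := by
  have hA : ∀ j : ℕ, ∑ l ∈ Finset.range (j + 1), (j.choose l : ℂ) * (-1) ^ l * x ^ l
      = (1 - x) ^ j := by
    intro j
    have hp := add_pow (-x) 1 j
    simp only [one_pow, mul_one] at hp
    rw [show (1 - x) = (-x + 1) by ring, hp]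
    exact Finset.sum_congr rfl fun l _ => by rw [neg_pow]; ring
  have hB : ∑ l ∈ Finset.range (m + 2), ((m+1).choose l : ℂ) * (-1) ^ l * (l : ℂ) * x ^ l
      = -((m : ℂ) + 1) * x * (1 - x) ^ m := by
    rw [Finset.sum_range_succ']
    simp only [Nat.cast_zero, mul_zero, zero_mul, pow_zero, mul_one, add_zero]
    push_cast
    have hstep : ∀ i ∈ Finset.range (m + 1),
        ((m+1).choose (i+1) : ℂ) * (-1) ^ (i+1) * ((i : ℂ) + 1) * x ^ (i+1)
        = (-((m : ℂ) + 1) * x) * ((m.choose i : ℂ) * (-1) ^ i * x ^ i) := by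
      intro i _
      have hnc : ((m+1).choose (i+1) : ℂ) * ((i : ℂ) + 1) = ((m : ℂ) + 1) * (m.choose i : ℂ) := by
        have h2 : ((m + 1).choose (i + 1) * (i + 1) : ℕ) = ((m + 1) * m.choose i : ℕ) :=
          (Nat.add_one_mul_choose_eq m i).symm
        exact_mod_cast congrArg (Nat.cast : ℕ → ℂ) h2
      calc ((m+1).choose (i+1) : ℂ) * (-1) ^ (i+1) * ((i : ℂ) + 1) * x ^ (i+1)
          = (((m+1).choose (i+1) : ℂ) * ((i : ℂ) + 1)) * ((-1) ^ (i+1) * x ^ (i+1)) := by ring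
        _ = (((m : ℂ) + 1) * (m.choose i : ℂ)) * ((-1) ^ (i+1) * x ^ (i+1)) := by rw [hnc]
        _ = (-((m : ℂ) + 1) * x) * ((m.choose i : ℂ) * (-1) ^ i * x ^ i) := by
            rw [pow_succ (-1 : ℂ), pow_succ x]; ring
    rw [Finset.sum_congr rfl hstep, ← Finset.mul_sum, hA m]
  have hsplit : ∀ l ∈ Finset.range (m + 2),
      ((m+1).choose l : ℂ) * (-1) ^ l * ((l : ℂ) + h - 1) * x ^ l
      = ((m+1).choose l : ℂ) * (-1) ^ l * (l : ℂ) * x ^ l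
        + (h - 1) * (((m+1).choose l : ℂ) * (-1) ^ l * x ^ l) := by
    intro l _; ring
  rw [Finset.sum_congr rfl hsplit, Finset.sum_add_distrib, hB, ← Finset.mul_sum, hA (m+1)]

/-- series representation of the `(h,q)`-Bernoulli number `β_{k,q}^h`
(with the convention `[0]_q^0 = 1`, i.e. `0^0 = 1`). -/
theorem qbeta_number_eq_tsum (q : ℝ) (hq0 : 0 < q) (hq1 : q < 1)
    (h : ℂ) (hh : 1 < h.re) (k : ℕ) (hk : 1 ≤ k) :
    Summable (fun n : ℕ => qcpow q (h * (n : ℂ)) * ((qnumR q (n : ℝ) : ℂ) ^ (k - 1))) ∧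
    Summable (fun n : ℕ => qcpow q ((h - 1) * (n : ℂ)) * ((qnumR q (n : ℝ) : ℂ) ^ k)) ∧
    qbeta q h k 0 =
      -(k : ℂ) * ∑' n : ℕ, qcpow q (h * (n : ℂ)) * ((qnumR q (n : ℝ) : ℂ) ^ (k - 1)) +
      (h - 1) * (1 - (q : ℂ)) *
        ∑' n : ℕ, qcpow q ((h - 1) * (n : ℂ)) * ((qnumR q (n : ℝ) : ℂ) ^ k) := by
  obtain ⟨m, rfl⟩ : ∃ m, k = m + 1 := ⟨k - 1, (Nat.succ_pred_eq_of_pos hk).symm⟩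
  simp only [Nat.add_sub_cancel]
  have hlog : Real.log q < 0 := Real.log_neg hq0 hq1
  have h1q : (0:ℝ) < 1 - q := by linarith
  have hcne : (1 : ℂ) - (q : ℂ) ≠ 0 := by
    have : ((1 - q : ℝ) : ℂ) ≠ 0 := Complex.ofReal_ne_zero.mpr (ne_of_gt h1q)
    simpa using this
  have hexp_lt : ∀ z : ℂ, 0 < z.re → ‖qcpow q z‖ < 1 := by
    intro z hz
    rw [norm_qcpow]
    calc Real.exp (z.re * Real.log q) < Real.exp 0 :=
          Real.exp_lt_exp.mpr (mul_neg_of_pos_of_neg hz hlog)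
      _ = 1 := Real.exp_zero
  have hqnorm_le : ∀ n : ℕ, ‖((qnumR q (n : ℝ) : ℝ) : ℂ)‖ ≤ 1 / (1 - q) := by
    intro n
    rw [Complex.norm_real, Real.norm_eq_abs]
    have he0 : 0 < Real.exp ((n:ℝ) * Real.log q) := Real.exp_pos _
    have he1 : Real.exp ((n:ℝ) * Real.log q) ≤ 1 := by
      rw [← Real.exp_zero]
      exact Real.exp_le_exp.mpr (mul_nonpos_of_nonneg_of_nonpos (Nat.cast_nonneg n) hlog.le)
    rw [qnumR, abs_div, abs_of_pos h1q,
      _root_.abs_of_nonneg (show (0:ℝ) ≤ 1 - Real.exp ((n:ℝ) * Real.log q) by linarith)]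
    gcongr
    linarith
  have hsum : ∀ (z : ℂ), 0 < z.re → ∀ mm : ℕ,
      Summable (fun n : ℕ => qcpow q (z * (n:ℂ)) * ((qnumR q (n:ℝ) : ℂ)) ^ mm) := by
    intro z hz mm
    set r := Real.exp (z.re * Real.log q) with hrdef
    have hr0 : 0 ≤ r := (Real.exp_pos _).le
    have hr1 : r < 1 := by
      rw [hrdef]
      calc Real.exp (z.re * Real.log q) < Real.exp 0 :=
            Real.exp_lt_exp.mpr (mul_neg_of_pos_of_neg hz hlog)
        _ = 1 := Real.exp_zero
    refine Summable.of_norm_bounded (g := fun n => (1/(1-q))^mm * r^n)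
      ((summable_geometric_of_lt_one hr0 hr1).mul_left _) ?_
    intro n
    rw [norm_mul, norm_pow]
    have h1 : ‖qcpow q (z * (n:ℂ))‖ = r ^ n := by
      rw [norm_qcpow]
      have hre : (z * (n:ℂ)).re = (n:ℝ) * z.re := by simp [Complex.mul_re]; ring
      rw [hre, mul_assoc, Real.exp_nat_mul]
    rw [h1, mul_comm]
    exact mul_le_mul_of_nonneg_right (pow_le_pow_left₀ (norm_nonneg _) (hqnorm_le n) mm)
      (pow_nonneg hr0 n)
  have hS1 := hsum h (by linarith) m
  have hS2 := hsum (h-1) (by simp [Complex.sub_re]; linarith) (m+1)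
  refine ⟨hS1, hS2, ?_⟩
  have hwre : ∀ l : ℕ, 0 < ((l:ℂ) + h - 1).re := by
    intro l
    simp only [Complex.sub_re, Complex.add_re, Complex.natCast_re, Complex.one_re]
    have : (0:ℝ) ≤ (l:ℝ) := Nat.cast_nonneg l
    linarith
  have hwlt : ∀ l : ℕ, ‖qcpow q ((l:ℂ) + h - 1)‖ < 1 := fun l => hexp_lt _ (hwre l)
  have hbeta : qbeta q h (m+1) 0 = ∑ l ∈ Finset.range (m+2),
      ∑' n : ℕ, ((1 - (q:ℂ))⁻¹ ^ (m+1) *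
        (((m+1).choose l : ℂ) * (-1)^l * (((l:ℂ)+h-1) * (1 - (q:ℂ)))))
          * (qcpow q ((l:ℂ)+h-1)) ^ n := by
    rw [qbeta, Finset.mul_sum]
    refine Finset.sum_congr rfl fun l _ => ?_
    rw [tsum_mul_left, tsum_geometric_of_norm_lt_one (hwlt l)]
    have h0 : qcpow q ((l:ℂ) * ((0:ℝ):ℂ)) = 1 := by simp [qcpow]
    rw [h0, qnum, div_div_eq_mul_div, div_eq_mul_inv]
    ring
  have hswap : qbeta q h (m+1) 0 = ∑' n : ℕ, ∑ l ∈ Finset.range (m+2),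
      ((1 - (q:ℂ))⁻¹ ^ (m+1) *
        (((m+1).choose l : ℂ) * (-1)^l * (((l:ℂ)+h-1) * (1 - (q:ℂ)))))
          * (qcpow q ((l:ℂ)+h-1)) ^ n := by
    rw [hbeta]
    exact (Summable.tsum_finsetSum (f := fun l n => ((1 - (q:ℂ))⁻¹ ^ (m+1) *
        (((m+1).choose l : ℂ) * (-1)^l * (((l:ℂ)+h-1) * (1 - (q:ℂ)))))
          * (qcpow q ((l:ℂ)+h-1)) ^ n) fun l _ =>
      Summable.mul_left _ (summable_geometric_of_norm_lt_one (hwlt l))).symm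
  have hpt : ∀ n : ℕ, (∑ l ∈ Finset.range (m+2),
      ((1 - (q:ℂ))⁻¹ ^ (m+1) *
        (((m+1).choose l : ℂ) * (-1)^l * (((l:ℂ)+h-1) * (1 - (q:ℂ)))))
          * (qcpow q ((l:ℂ)+h-1)) ^ n)
      = -((m+1 : ℕ) : ℂ) * (qcpow q (h * n) * ((qnumR q (n:ℝ) : ℂ)) ^ m)
        + ((h - 1) * (1 - (q:ℂ))) * (qcpow q ((h-1) * n) * ((qnumR q (n:ℝ) : ℂ)) ^ (m+1)) := by
    intro n
    set x : ℂ := qcpow q ((n : ℕ) : ℂ) with hx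
    set u : ℂ := qcpow q ((h-1) * (n:ℂ)) with hu
    have hwpow : ∀ l : ℕ, (qcpow q ((l:ℂ) + h - 1)) ^ n = x ^ l * u := by
      intro l
      rw [← qcpow_nat_mul]
      rw [show ((l:ℂ) + h - 1) * n = (n:ℂ) * l + (h-1) * n by ring, qcpow_add, qcpow_nat_mul]
    have hhx : qcpow q (h * n) = x * u := by
      rw [show h * (n:ℂ) = (n:ℂ) + (h-1) * n by ring, qcpow_add]
    have hqn : ((qnumR q (n:ℝ) : ℝ) : ℂ) = (1 - x) / (1 - (q:ℂ)) := qnumR_cast q n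
    have hsum_eq : (∑ l ∈ Finset.range (m+2),
        ((1 - (q:ℂ))⁻¹ ^ (m+1) *
          (((m+1).choose l : ℂ) * (-1)^l * (((l:ℂ)+h-1) * (1 - (q:ℂ)))))
            * (qcpow q ((l:ℂ)+h-1)) ^ n)
        = ((1 - (q:ℂ))⁻¹ ^ (m+1) * (1 - (q:ℂ)) * u) *
          ∑ l ∈ Finset.range (m+2), ((m+1).choose l : ℂ) * (-1)^l * ((l:ℂ)+h-1) * x ^ l := by
      rw [Finset.mul_sum]
      refine Finset.sum_congr rfl fun l _ => ?_
      rw [hwpow l]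
      ring
    rw [hsum_eq, key_alg m h x, hqn, hhx]
    rw [div_pow, div_pow]
    simp only [div_eq_mul_inv, ← inv_pow]
    push_cast
    linear_combination (-((m:ℂ)+1)) * x * u * (1-x)^m * (1 - (q:ℂ))⁻¹^m * mul_inv_cancel₀ hcne
  rw [hswap, tsum_congr hpt,
    Summable.tsum_add (hS1.mul_left _) (hS2.mul_left _), tsum_mul_left, tsum_mul_left]
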